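/- There exists a quasicontinuous poset that does not have weak one-step closure. Specifically, let L = (ℕ × (ℕ ∪ {ω})) ∪ ℕ with the order: (m,n₁) ≤ (m,n₂) iff n₁ ≤ n₂; (m,n) ≤ (m,ω); x ≤ y for x,y ∈ ℕ with x ≤ y; (m,n) ≤ k for k ∈ ℕ with k ≥ n and m ≥ 2; (1,n) ≤ (m₂,ω) when m₂ ≥ n; (m₁,n) ≤ (m₂,n) when 2 ≤ m₁ ≤ m₂. Then L is quasicontinuous, but cl(ℕ) = L while (1,ω) ∉ ℕ''. -/

import Mathlib

open Set

section OrderDefs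

variable {L : Type*} [Preorder L]

/-- Downward closure `↓A`. -/
def dw (A : Set L) : Set L := {x | ∃ a ∈ A, x ≤ a}

/-- Upward closure `↑A`. -/
def up (A : Set L) : Set L := {x | ∃ a ∈ A, a ≤ x}

/-- Scott closure of a set. -/
def scottCl (A : Set L) : Set L := @closure L (Topology.scott L Set.univ) A

/-- `A' = {x : ∃ directed D ⊆ ↓A with x = sup D}`. -/
def oneStep (A : Set L) : Set L :=
  {x | ∃ D : Set L, D ⊆ dw A ∧ D.Nonempty ∧ DirectedOn (· ≤ ·) D ∧ IsLUB D x}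

/-- `A'' = {x : ∃ directed D ⊆ ↓A with x ≤ sup D}`. -/
def weakOneStep (A : Set L) : Set L :=
  {x | ∃ D : Set L, D ⊆ dw A ∧ D.Nonempty ∧ DirectedOn (· ≤ ·) D ∧ ∃ y, IsLUB D y ∧ x ≤ y}

/-- A poset has one-step closure if `cl(A) = A'` for all `A`. -/
def HasOneStepClosure (L : Type*) [Preorder L] : Prop :=
  ∀ A : Set L, scottCl A = oneStep A

/-- A poset has weak one-step closure if `cl(A) = A''` for all `A`. -/
def HasWeakOneStepClosure (L : Type*) [Preorder L] : Prop :=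
  ∀ A : Set L, scottCl A = weakOneStep A

/-- Meet continuity: `x ≤ sup D` implies `x ∈ cl(↓D ∩ ↓x)`. -/
def MeetContinuous (L : Type*) [Preorder L] : Prop :=
  ∀ x : L, ∀ D : Set L, D.Nonempty → DirectedOn (· ≤ ·) D → ∀ s, IsLUB D s → x ≤ s →
    x ∈ scottCl (dw D ∩ dw ({x} : Set L))

/-- The way-below relation `x ≪ y`. -/
def wayBelow (x y : L) : Prop :=
  ∀ D : Set L, D.Nonempty → DirectedOn (· ≤ ·) D → ∀ s, IsLUB D s → y ≤ s →
    (D ∩ up ({x} : Set L)).Nonempty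

/-- The weakly way-below relation `x ≪_w y`. -/
def weaklyWayBelow (x y : L) : Prop :=
  ∀ D : Set L, D.Nonempty → DirectedOn (· ≤ ·) D → IsLUB D y →
    (D ∩ up ({x} : Set L)).Nonempty

/-- A continuous poset: each `⇓x` is directed with supremum `x`. -/
def ContinuousPoset (L : Type*) [Preorder L] : Prop :=
  ∀ x : L, {y | wayBelow y x}.Nonempty ∧ DirectedOn (· ≤ ·) {y | wayBelow y x} ∧
    IsLUB {y | wayBelow y x} x

/-- An exact poset: each `⇓_w x` is directed with supremum `x`. -/
def ExactPoset (L : Type*) [Preorder L] : Prop :=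
  ∀ x : L, {y | weaklyWayBelow y x}.Nonempty ∧ DirectedOn (· ≤ ·) {y | weaklyWayBelow y x} ∧
    IsLUB {y | weaklyWayBelow y x} x

/-- `F ≪ x` for a set `F`: every directed `D` with `sup D ≥ x` meets `↑F`. -/
def finWayBelow (F : Set L) (x : L) : Prop :=
  ∀ D : Set L, D.Nonempty → DirectedOn (· ≤ ·) D → ∀ s, IsLUB D s → x ≤ s →
    (D ∩ up F).Nonempty

/-- A quasicontinuous poset: each `fin(x)` is a directed family (Smyth preorder)
with `↑x = ⋂_{F ∈ fin(x)} ↑F`. -/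
def QuasicontinuousPoset (L : Type*) [Preorder L] : Prop :=
  ∀ x : L, {F : Set L | F.Finite ∧ finWayBelow F x}.Nonempty ∧
    DirectedOn (fun F G => up G ⊆ up F) {F : Set L | F.Finite ∧ finWayBelow F x} ∧
    up ({x} : Set L) = ⋂ F ∈ {F : Set L | F.Finite ∧ finWayBelow F x}, up F

/-- A dcpo: every (nonempty) directed subset has a least upper bound. -/
def IsDcpo (L : Type*) [Preorder L] : Prop :=
  ∀ D : Set L, D.Nonempty → DirectedOn (· ≤ ·) D → ∃ x, IsLUB D x

end OrderDefs

/-- The poset `L = (ℕ × (ℕ ∪ {ω})) ∪ ℕ` of the example.  Indices are shifted by one so that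
the paper's `ℕ = {1, 2, ...}` corresponds to Lean's `ℕ = {0, 1, ...}`:  `p m n` represents the
pair `(m+1, n+1)`, `pw m` represents `(m+1, ω)` and `nt k` represents the natural number
`k+1`. -/
inductive L₂ : Type where
  | p : ℕ → ℕ → L₂
  | pw : ℕ → L₂
  | nt : ℕ → L₂

namespace L₂

/-- The order of the example: the reflexive-transitive closure of the clauses
(i) `(m,n₁) ≤ (m,n₂)` iff `n₁ ≤ n₂`; (ii) `(m,n) ≤ (m,ω)`; (iii) the usual order on `ℕ`;
(iv) `(m,n) ≤ k` for `k ∈ ℕ` with `k ≥ n`, `m ≥ 2`; (v) `(1,n) ≤ (m₂,ω)` for `m₂ ≥ n`;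
(vi) `(m₁,n) ≤ (m₂,n)` for `2 ≤ m₁ ≤ m₂` (with `n ∈ ℕ ∪ {ω}`), stated with shifted
indices (paper's `m ≥ 2` becomes `m ≥ 1`, paper's `m = 1` becomes `m = 0`). -/
protected def le : L₂ → L₂ → Prop
  | p m n₁, p m' n₂ => (m = m' ∨ (1 ≤ m ∧ m ≤ m')) ∧ n₁ ≤ n₂
  | p m n₁, pw m' => m = m' ∨ (1 ≤ m ∧ m ≤ m') ∨ (m = 0 ∧ n₁ ≤ m')
  | p m n, nt k => 1 ≤ m ∧ n ≤ k
  | pw m₁, pw m₂ => m₁ = m₂ ∨ (1 ≤ m₁ ∧ m₁ ≤ m₂)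
  | nt j, nt k => j ≤ k
  | _, _ => False

instance : PartialOrder L₂ where
  le := L₂.le
  le_refl x := by cases x <;> simp [L₂.le]
  le_trans x y z hxy hyz := by
    cases x <;> cases y <;> cases z <;> simp_all [L₂.le] <;> omega
  le_antisymm x y hxy hyx := by
    cases x <;> cases y <;> simp_all [L₂.le] <;> omega

end L₂

namespace L₂

lemma p_le_p {m n m' n'} : (p m n ≤ p m' n') ↔ (m = m' ∨ (1 ≤ m ∧ m ≤ m')) ∧ n ≤ n' := Iff.rfl
lemma p_le_pw {m n m'} : (p m n ≤ pw m') ↔ (m = m' ∨ (1 ≤ m ∧ m ≤ m') ∨ (m = 0 ∧ n ≤ m')) := Iff.rfl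
lemma p_le_nt {m n k} : (p m n ≤ nt k) ↔ (1 ≤ m ∧ n ≤ k) := Iff.rfl
lemma pw_le_pw {m m'} : (pw m ≤ pw m') ↔ (m = m' ∨ (1 ≤ m ∧ m ≤ m')) := Iff.rfl
lemma nt_le_nt {j k} : (nt j ≤ nt k) ↔ j ≤ k := Iff.rfl
lemma pw_le_p {a m n} : ¬ (pw a ≤ p m n) := id
lemma pw_le_nt {a k} : ¬ (pw a ≤ nt k) := id
lemma nt_le_p {k m n} : ¬ (nt k ≤ p m n) := id
lemma nt_le_pw {k a} : ¬ (nt k ≤ pw a) := id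

/-- Classification of directed suprema in `L₂` when the sup is not attained. -/
theorem classify {D : Set L₂} {s : L₂} (hne : D.Nonempty) (hdir : DirectedOn (· ≤ ·) D)
    (hlub : IsLUB D s) (hs : s ∉ D) :
    (s = pw 0 ∧ ∀ t, ∃ j, t ≤ j ∧ p 0 j ∈ D) ∨
    (∃ J, s = nt J ∧ ∀ t, ∃ m, 1 ≤ m ∧ t ≤ m ∧ p m J ∈ D) ∨
    (∃ M, 1 ≤ M ∧ s = pw M ∧ ∀ t, ∃ j, t ≤ j ∧ p M j ∈ D) := by
  have hub : ∀ d ∈ D, d ≤ s := fun d hd => hlub.1 hd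
  have hnopw : ∀ a, pw a ∉ D := by
    intro a ha
    obtain ⟨S, rfl⟩ : ∃ S, s = pw S := by
      cases s with
      | p m n => exact absurd (hub _ ha) pw_le_p
      | nt k => exact absurd (hub _ ha) pw_le_nt
      | pw S => exact ⟨S, rfl⟩
    have hPbdd : BddAbove {b | pw b ∈ D} := by
      refine ⟨S, fun b hb => ?_⟩
      have := pw_le_pw.mp (hub _ hb); omega
    have hmem : pw (sSup {b | pw b ∈ D}) ∈ D := Nat.sSup_mem ⟨a, ha⟩ hPbdd
    set B := sSup {b | pw b ∈ D} with hB
    have hkey : ∀ e ∈ D, pw B ≤ e → e = pw B := by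
      intro e he hle
      cases e with
      | p m n => exact absurd hle pw_le_p
      | nt k => exact absurd hle pw_le_nt
      | pw c =>
        have h1 : c ≤ B := le_csSup hPbdd he
        have h2 := pw_le_pw.mp hle
        congr 1; omega
    have hub' : pw B ∈ upperBounds D := by
      intro d hd
      obtain ⟨e, he, hde, hBe⟩ := hdir _ hd _ hmem
      rwa [hkey e he hBe] at hde
    have heq : pw S = pw B := le_antisymm (hlub.2 hub') (hub _ hmem)
    exact hs (heq ▸ hmem)
  have hnont : ∀ a, nt a ∉ D := by
    intro a ha
    obtain ⟨S, rfl⟩ : ∃ S, s = nt S := by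
      cases s with
      | p m n => exact absurd (hub _ ha) nt_le_p
      | pw k => exact absurd (hub _ ha) nt_le_pw
      | nt S => exact ⟨S, rfl⟩
    have hPbdd : BddAbove {b | nt b ∈ D} := ⟨S, fun b hb => nt_le_nt.mp (hub _ hb)⟩
    have hmem : nt (sSup {b | nt b ∈ D}) ∈ D := Nat.sSup_mem ⟨a, ha⟩ hPbdd
    set B := sSup {b | nt b ∈ D} with hB
    have hub' : nt B ∈ upperBounds D := by
      intro d hd
      obtain ⟨e, he, hde, hae⟩ := hdir _ hd _ ha
      cases e with
      | p m n => exact absurd hae nt_le_p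
      | pw k => exact absurd hae nt_le_pw
      | nt c => exact le_trans hde (nt_le_nt.mpr (le_csSup hPbdd he))
    have heq : nt S = nt B := le_antisymm (hlub.2 hub') (hub _ hmem)
    exact hs (heq ▸ hmem)
  have hp : ∀ d ∈ D, ∃ m j, d = p m j := by
    intro d hd
    cases d with
    | p m j => exact ⟨m, j, rfl⟩
    | pw a => exact absurd hd (hnopw a)
    | nt a => exact absurd hd (hnont a)
  by_cases h0 : ∃ j, p 0 j ∈ D
  · obtain ⟨j₀, hj₀⟩ := h0
    have hall0 : ∀ d ∈ D, ∃ j, d = p 0 j := by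
      intro d hd
      obtain ⟨m, j, rfl⟩ := hp d hd
      obtain ⟨e, he, h1, h2⟩ := hdir _ hd _ hj₀
      obtain ⟨m', j', rfl⟩ := hp e he
      have e1 := p_le_p.mp h1
      have e2 := p_le_p.mp h2
      have hm : m = 0 := by omega
      exact ⟨j, by rw [hm]⟩
    by_cases hb : ∀ t, ∃ j, t ≤ j ∧ p 0 j ∈ D
    · left
      refine ⟨?_, hb⟩
      cases s with
      | p a b =>
        obtain ⟨j, hj, hjD⟩ := hb (b + 1)
        have := p_le_p.mp (hub _ hjD); omega
      | nt K =>
        obtain ⟨j, hj, hjD⟩ := hb 0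
        have := p_le_nt.mp (hub _ hjD); omega
      | pw a =>
        rcases Nat.eq_zero_or_pos a with rfl | hapos
        · rfl
        · obtain ⟨j, hj, hjD⟩ := hb (a + 1)
          have := p_le_pw.mp (hub _ hjD); omega
    · push_neg at hb
      obtain ⟨t, ht⟩ := hb
      have hbdd : BddAbove {j | p 0 j ∈ D} := by
        refine ⟨t, fun j hj => ?_⟩
        by_contra hc
        exact (ht j (by omega)) hj
      have hmem : p 0 (sSup {j | p 0 j ∈ D}) ∈ D := Nat.sSup_mem ⟨j₀, hj₀⟩ hbdd
      have hub' : p 0 (sSup {j | p 0 j ∈ D}) ∈ upperBounds D := by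
        intro d hd
        obtain ⟨j, rfl⟩ := hall0 d hd
        exact p_le_p.mpr ⟨Or.inl rfl, le_csSup hbdd hd⟩
      have heq : s = p 0 (sSup {j | p 0 j ∈ D}) := le_antisymm (hlub.2 hub') (hub _ hmem)
      exact absurd (heq ▸ hmem) hs
  · push_neg at h0
    have hge1 : ∀ m j, p m j ∈ D → 1 ≤ m := by
      intro m j hd
      rcases Nat.eq_zero_or_pos m with rfl | h
      · exact absurd hd (h0 j)
      · exact h
    have hall1 : ∀ d ∈ D, ∃ m j, 1 ≤ m ∧ d = p m j := by
      intro d hd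
      obtain ⟨m, j, rfl⟩ := hp d hd
      exact ⟨m, j, hge1 m j hd, rfl⟩
    by_cases hm : ∀ t, ∃ m j, t ≤ m ∧ p m j ∈ D
    · by_cases hj : ∀ t, ∃ m j, t ≤ j ∧ p m j ∈ D
      · exfalso
        cases s with
        | p a b =>
          obtain ⟨m, j, hjt, hD⟩ := hj (b + 1)
          have := p_le_p.mp (hub _ hD); omega
        | pw a =>
          obtain ⟨m, j, hmt, hD⟩ := hm (a + 1)
          have h1 := p_le_pw.mp (hub _ hD)
          have h2 := hge1 _ _ hD
          omega
        | nt K =>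
          obtain ⟨m, j, hjt, hD⟩ := hj (K + 1)
          have := p_le_nt.mp (hub _ hD); omega
      · push_neg at hj
        obtain ⟨t, htj⟩ := hj
        have hJne : {j | ∃ m, p m j ∈ D}.Nonempty := by
          obtain ⟨m, j, _, hD⟩ := hm 0; exact ⟨j, m, hD⟩
        have hJbdd : BddAbove {j | ∃ m, p m j ∈ D} := by
          refine ⟨t, ?_⟩
          rintro j ⟨m, hD⟩
          by_contra hc
          exact (htj m j (by omega)) hD
        obtain ⟨m₁, hm₁⟩ : ∃ m, p m (sSup {j | ∃ m, p m j ∈ D}) ∈ D := Nat.sSup_mem hJne hJbdd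
        set J := sSup {j | ∃ m, p m j ∈ D} with hJ
        have key : ∀ t', ∃ m, 1 ≤ m ∧ t' ≤ m ∧ p m J ∈ D := by
          intro t'
          obtain ⟨m₀, j₀, hm₀, hD₀⟩ := hm t'
          obtain ⟨e, he, h1, h2⟩ := hdir _ hD₀ _ hm₁
          obtain ⟨m₂, j₂, hm₂1, rfl⟩ := hall1 e he
          have e1 := p_le_p.mp h1
          have e2 := p_le_p.mp h2
          have hj₂ : j₂ ≤ J := le_csSup hJbdd ⟨m₂, he⟩
          have hj2J : j₂ = J := by omega
          exact ⟨m₂, hm₂1, by omega, hj2J ▸ he⟩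
        have hub' : nt J ∈ upperBounds D := by
          intro d hd
          obtain ⟨m, j, hm1, rfl⟩ := hall1 d hd
          exact p_le_nt.mpr ⟨hm1, le_csSup hJbdd ⟨m, hd⟩⟩
        have h1 : s ≤ nt J := hlub.2 hub'
        cases s with
        | p a b =>
          obtain ⟨m, j, hm', hD⟩ := hm (a + 1)
          have := p_le_p.mp (hub _ hD)
          exact absurd rfl (by omega : a ≠ a)
        | pw a =>
          obtain ⟨m, j, hm', hD⟩ := hm (a + 1)
          have h2 := p_le_pw.mp (hub _ hD)
          have h3 := hge1 _ _ hD
          omega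
        | nt K =>
          have h2 := p_le_nt.mp (hub _ hm₁)
          have h3 := nt_le_nt.mp h1
          have hK : K = J := by omega
          exact Or.inr (Or.inl ⟨K, rfl, hK ▸ key⟩)
    · push_neg at hm
      obtain ⟨t, htm⟩ := hm
      have hMne : {m | ∃ j, p m j ∈ D}.Nonempty := by
        obtain ⟨d, hd⟩ := hne
        obtain ⟨m, j, _, rfl⟩ := hall1 d hd
        exact ⟨m, j, hd⟩
      have hMbdd : BddAbove {m | ∃ j, p m j ∈ D} := by
        refine ⟨t, ?_⟩
        rintro m ⟨j, hD⟩
        by_contra hc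
        exact (htm m j (by omega)) hD
      obtain ⟨j₁, hj₁⟩ : ∃ j, p (sSup {m | ∃ j, p m j ∈ D}) j ∈ D := Nat.sSup_mem hMne hMbdd
      set M := sSup {m | ∃ j, p m j ∈ D} with hM
      have hM1 : 1 ≤ M := hge1 _ _ hj₁
      by_cases hj : ∀ t, ∃ m j, t ≤ j ∧ p m j ∈ D
      · have key : ∀ t', ∃ j, t' ≤ j ∧ p M j ∈ D := by
          intro t'
          obtain ⟨m₀, j₀, hj₀', hD₀⟩ := hj t'
          obtain ⟨e, he, h1, h2⟩ := hdir _ hD₀ _ hj₁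
          obtain ⟨m₂, j₂, hm₂1, rfl⟩ := hall1 e he
          have e1 := p_le_p.mp h1
          have e2 := p_le_p.mp h2
          have hm₂ : m₂ ≤ M := le_csSup hMbdd ⟨j₂, he⟩
          have hmM : m₂ = M := by omega
          exact ⟨j₂, by omega, hmM ▸ he⟩
        have hub' : pw M ∈ upperBounds D := by
          intro d hd
          obtain ⟨m, j, hm1, rfl⟩ := hall1 d hd
          exact p_le_pw.mpr (Or.inr (Or.inl ⟨hm1, le_csSup hMbdd ⟨j, hd⟩⟩))
        have h1 : s ≤ pw M := hlub.2 hub'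
        cases s with
        | p a b =>
          obtain ⟨j, hj', hD⟩ := key (b + 1)
          have := p_le_p.mp (hub _ hD); omega
        | nt K =>
          obtain ⟨j, hj', hD⟩ := key (K + 1)
          have := p_le_nt.mp (hub _ hD); omega
        | pw a =>
          have h2 := p_le_pw.mp (hub _ hj₁)
          have h3 := pw_le_pw.mp h1
          have haM : a = M := by omega
          exact Or.inr (Or.inr ⟨a, by omega, rfl, haM ▸ key⟩)
      · push_neg at hj
        obtain ⟨t', htj⟩ := hj
        have hJne : {j | ∃ m, p m j ∈ D}.Nonempty := ⟨j₁, M, hj₁⟩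
        have hJbdd : BddAbove {j | ∃ m, p m j ∈ D} := by
          refine ⟨t', ?_⟩
          rintro j ⟨m, hD⟩
          by_contra hc
          exact (htj m j (by omega)) hD
        obtain ⟨m₁, hm₁⟩ : ∃ m, p m (sSup {j | ∃ m, p m j ∈ D}) ∈ D := Nat.sSup_mem hJne hJbdd
        set J := sSup {j | ∃ m, p m j ∈ D} with hJ
        obtain ⟨e, he, h1, h2⟩ := hdir _ hj₁ _ hm₁
        obtain ⟨m₂, j₂, hm₂1, rfl⟩ := hall1 e he
        have e1 := p_le_p.mp h1
        have e2 := p_le_p.mp h2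
        have hm₂ : m₂ ≤ M := le_csSup hMbdd ⟨j₂, he⟩
        have hj₂ : j₂ ≤ J := le_csSup hJbdd ⟨m₂, he⟩
        have hub' : p m₂ j₂ ∈ upperBounds D := by
          intro d hd
          obtain ⟨m, j, hm1, rfl⟩ := hall1 d hd
          have hmle : m ≤ M := le_csSup hMbdd ⟨j, hd⟩
          have hjle : j ≤ J := le_csSup hJbdd ⟨m, hd⟩
          exact p_le_p.mpr ⟨Or.inr ⟨hm1, by omega⟩, by omega⟩
        have heq : s = p m₂ j₂ := le_antisymm (hlub.2 hub') (hub _ he)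
        exact absurd (heq ▸ he) hs

end L₂

namespace L₂

lemma dir_pM (M : ℕ) : DirectedOn (· ≤ ·) {d : L₂ | ∃ j, d = p M j} := by
  rintro _ ⟨j, rfl⟩ _ ⟨j', rfl⟩
  exact ⟨p M (max j j'), ⟨max j j', rfl⟩, p_le_p.mpr ⟨Or.inl rfl, le_max_left _ _⟩,
    p_le_p.mpr ⟨Or.inl rfl, le_max_right _ _⟩⟩

lemma lub_p0 : IsLUB {d : L₂ | ∃ j, d = p 0 j} (pw 0) := by
  constructor
  · rintro _ ⟨j, rfl⟩
    exact p_le_pw.mpr (Or.inl rfl)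
  · intro u hu
    cases u with
    | p a b =>
      have := p_le_p.mp (hu ⟨b + 1, rfl⟩); omega
    | nt K =>
      have := p_le_nt.mp (hu ⟨0, rfl⟩); omega
    | pw a =>
      have := p_le_pw.mp (hu ⟨a + 1, rfl⟩)
      have ha : a = 0 := by omega
      exact pw_le_pw.mpr (Or.inl ha.symm)

lemma lub_pM (M : ℕ) (hM : 1 ≤ M) : IsLUB {d : L₂ | ∃ j, d = p M j} (pw M) := by
  constructor
  · rintro _ ⟨j, rfl⟩
    exact p_le_pw.mpr (Or.inl rfl)
  · intro u hu
    cases u with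
    | p a b =>
      have := p_le_p.mp (hu ⟨b + 1, rfl⟩); omega
    | nt K =>
      have := p_le_nt.mp (hu ⟨K + 1, rfl⟩); omega
    | pw a =>
      have := p_le_pw.mp (hu ⟨0, rfl⟩)
      exact pw_le_pw.mpr (by omega)

lemma dir_col (k : ℕ) : DirectedOn (· ≤ ·) {d : L₂ | ∃ m, 1 ≤ m ∧ d = p m k} := by
  rintro _ ⟨m, hm, rfl⟩ _ ⟨m', hm', rfl⟩
  exact ⟨p (max m m') k, ⟨max m m', by omega, rfl⟩,
    p_le_p.mpr ⟨Or.inr ⟨hm, le_max_left _ _⟩, le_rfl⟩,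
    p_le_p.mpr ⟨Or.inr ⟨hm', le_max_right _ _⟩, le_rfl⟩⟩

lemma lub_col (k : ℕ) : IsLUB {d : L₂ | ∃ m, 1 ≤ m ∧ d = p m k} (nt k) := by
  constructor
  · rintro _ ⟨m, hm, rfl⟩
    exact p_le_nt.mpr ⟨hm, le_rfl⟩
  · intro u hu
    cases u with
    | p a b =>
      have := p_le_p.mp (hu ⟨a + 1, by omega, rfl⟩); omega
    | pw a =>
      have := p_le_pw.mp (hu ⟨a + 1, by omega, rfl⟩); omega
    | nt K =>
      have := p_le_nt.mp (hu ⟨1, le_rfl, rfl⟩)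
      exact nt_le_nt.mpr this.2

/-- The second member of the approximating finite sets. -/
def w : L₂ → ℕ → L₂
  | p 0 n, t => p (max n 1) t
  | p (m+1) n, _ => p (m+1) n
  | nt k, t => p (t+1) k
  | pw 0, t => p 0 t
  | pw (M+1), t => p (M+1) t

lemma w_mono (x : L₂) {t t'} (h : t ≤ t') : w x t ≤ w x t' := by
  cases x with
  | p m n =>
    cases m with
    | zero => exact p_le_p.mpr ⟨Or.inl rfl, h⟩
    | succ m => exact le_refl _
  | nt k => exact p_le_p.mpr ⟨Or.inr ⟨by omega, by omega⟩, le_rfl⟩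
  | pw M =>
    cases M with
    | zero => exact p_le_p.mpr ⟨Or.inl rfl, h⟩
    | succ M => exact p_le_p.mpr ⟨Or.inl rfl, h⟩

lemma mem_up_of_fwb {F : Set L₂} {x : L₂} (h : finWayBelow F x) : x ∈ up F := by
  obtain ⟨d, hd, hdF⟩ :=
    h {x} ⟨x, rfl⟩ (directedOn_singleton x) x isLUB_singleton le_rfl
  rw [Set.mem_singleton_iff] at hd
  exact hd ▸ hdF

/-- P1 : the sets `{x, w x t}` are way below `x`. -/
lemma fwb_S (x : L₂) (t : ℕ) : finWayBelow ({x, w x t} : Set L₂) x := by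
  intro D hne hdir s hlub hxs
  by_cases hsD : s ∈ D
  · exact ⟨s, hsD, x, Set.mem_insert _ _, hxs⟩
  rcases classify hne hdir hlub hsD with ⟨rfl, H⟩ | ⟨J, rfl, H⟩ | ⟨M, hM, rfl, H⟩
  · -- s = pw 0
    cases x with
    | p m n =>
      have hm : m = 0 := by have := p_le_pw.mp hxs; omega
      subst hm
      obtain ⟨j, hj, hD⟩ := H n
      exact ⟨p 0 j, hD, p 0 n, Set.mem_insert _ _, p_le_p.mpr ⟨Or.inl rfl, hj⟩⟩
    | pw a =>
      have ha : a = 0 := by have := pw_le_pw.mp hxs; omega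
      subst ha
      obtain ⟨j, hj, hD⟩ := H t
      exact ⟨p 0 j, hD, w (pw 0) t, Set.mem_insert_iff.mpr (Or.inr rfl),
        p_le_p.mpr ⟨Or.inl rfl, hj⟩⟩
    | nt k => exact absurd hxs nt_le_pw
  · -- s = nt J
    cases x with
    | p m n =>
      have h1 := p_le_nt.mp hxs
      obtain ⟨m', hm'1, hmm', hD⟩ := H m
      exact ⟨p m' J, hD, p m n, Set.mem_insert _ _,
        p_le_p.mpr ⟨Or.inr ⟨h1.1, hmm'⟩, h1.2⟩⟩
    | nt k =>
      have h1 := nt_le_nt.mp hxs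
      obtain ⟨m', hm'1, hmm', hD⟩ := H (t + 1)
      exact ⟨p m' J, hD, w (nt k) t, Set.mem_insert_iff.mpr (Or.inr rfl),
        p_le_p.mpr ⟨Or.inr ⟨by omega, hmm'⟩, h1⟩⟩
    | pw a => exact absurd hxs pw_le_nt
  · -- s = pw M
    cases x with
    | p m n =>
      rcases p_le_pw.mp hxs with h | h | h
      · obtain ⟨j, hj, hD⟩ := H n
        exact ⟨p M j, hD, p m n, Set.mem_insert _ _, p_le_p.mpr ⟨Or.inl h, hj⟩⟩
      · obtain ⟨j, hj, hD⟩ := H n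
        exact ⟨p M j, hD, p m n, Set.mem_insert _ _, p_le_p.mpr ⟨Or.inr h, hj⟩⟩
      · obtain ⟨rfl, hnM⟩ := h
        obtain ⟨j, hj, hD⟩ := H t
        exact ⟨p M j, hD, w (p 0 n) t, Set.mem_insert_iff.mpr (Or.inr rfl),
          p_le_p.mpr ⟨Or.inr ⟨by omega, by omega⟩, hj⟩⟩
    | pw a =>
      have ha : 1 ≤ a ∧ a ≤ M := by have := pw_le_pw.mp hxs; omega
      cases a with
      | zero => omega
      | succ a' =>
        obtain ⟨j, hj, hD⟩ := H t
        exact ⟨p M j, hD, w (pw (a' + 1)) t, Set.mem_insert_iff.mpr (Or.inr rfl),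
          p_le_p.mpr ⟨Or.inr ⟨by omega, by omega⟩, hj⟩⟩
    | nt k => exact absurd hxs nt_le_pw

/-- P2 : every finite-way-below set is refined by some `{x, w x t}`. -/
lemma exists_t {x : L₂} {G : Set L₂} (hG : finWayBelow G x) :
    ∃ t₀, ∀ y, y ∈ up ({x, w x t₀} : Set L₂) → y ∈ up G := by
  obtain ⟨g₀, hg₀G, hg₀⟩ := mem_up_of_fwb hG
  have trivial_branch : ∀ t₀ y, y ∈ up ({x, w x t₀} : Set L₂) →
      (w x t₀ ≤ y → y ∈ up G) → y ∈ up G := by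
    intro t₀ y hy hw
    obtain ⟨a, ha, hle⟩ := hy
    simp only [Set.mem_insert_iff, Set.mem_singleton_iff] at ha
    rcases ha with rfl | rfl
    · exact ⟨g₀, hg₀G, le_trans hg₀ hle⟩
    · exact hw hle
  cases x with
  | p m n =>
    cases m with
    | succ m => exact ⟨0, fun y hy => trivial_branch 0 y hy
        (fun h => ⟨g₀, hg₀G, le_trans hg₀ h⟩)⟩
    | zero =>
      obtain ⟨d, hd, g, hgG, hgd⟩ := hG {d : L₂ | ∃ j, d = p (max n 1) j}
        ⟨p (max n 1) 0, 0, rfl⟩ (dir_pM (max n 1)) _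
        (lub_pM (max n 1) (le_max_right n 1))
        (p_le_pw.mpr (Or.inr (Or.inr ⟨rfl, le_max_left n 1⟩)))
      obtain ⟨j₀, rfl⟩ := hd
      cases g with
      | p a b =>
        have hab := p_le_p.mp hgd
        refine ⟨b, fun y hy => trivial_branch b y hy (fun h => ?_)⟩
        exact ⟨p a b, hgG, le_trans (p_le_p.mpr ⟨by omega, le_rfl⟩ : p a b ≤ p (max n 1) b) h⟩
      | pw a => exact absurd hgd pw_le_p
      | nt a => exact absurd hgd nt_le_p
  | nt k =>
    obtain ⟨d, hd, g, hgG, hgd⟩ := hG {d : L₂ | ∃ m, 1 ≤ m ∧ d = p m k}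
      ⟨p 1 k, 1, le_rfl, rfl⟩ (dir_col k) _ (lub_col k) le_rfl
    obtain ⟨m₀, hm₀, rfl⟩ := hd
    cases g with
    | p a b =>
      have hab := p_le_p.mp hgd
      refine ⟨a, fun y hy => trivial_branch a y hy (fun h => ?_)⟩
      exact ⟨p a b, hgG, le_trans (p_le_p.mpr ⟨by omega, hab.2⟩ : p a b ≤ p (a + 1) k) h⟩
    | pw a => exact absurd hgd pw_le_p
    | nt a => exact absurd hgd nt_le_p
  | pw M =>
    cases M with
    | zero =>
      obtain ⟨d, hd, g, hgG, hgd⟩ := hG {d : L₂ | ∃ j, d = p 0 j}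
        ⟨p 0 0, 0, rfl⟩ (dir_pM 0) _ lub_p0 le_rfl
      obtain ⟨j₀, rfl⟩ := hd
      cases g with
      | p a b =>
        have hab := p_le_p.mp hgd
        refine ⟨b, fun y hy => trivial_branch b y hy (fun h => ?_)⟩
        exact ⟨p a b, hgG, le_trans (p_le_p.mpr ⟨by omega, le_rfl⟩ : p a b ≤ p 0 b) h⟩
      | pw a => exact absurd hgd pw_le_p
      | nt a => exact absurd hgd nt_le_p
    | succ M' =>
      obtain ⟨d, hd, g, hgG, hgd⟩ := hG {d : L₂ | ∃ j, d = p (M' + 1) j}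
        ⟨p (M' + 1) 0, 0, rfl⟩ (dir_pM (M' + 1)) _
        (lub_pM (M' + 1) (by omega)) le_rfl
      obtain ⟨j₀, rfl⟩ := hd
      cases g with
      | p a b =>
        have hab := p_le_p.mp hgd
        refine ⟨b, fun y hy => trivial_branch b y hy (fun h => ?_)⟩
        exact ⟨p a b, hgG, le_trans (p_le_p.mpr ⟨by omega, le_rfl⟩ : p a b ≤ p (M' + 1) b) h⟩
      | pw a => exact absurd hgd pw_le_p
      | nt a => exact absurd hgd nt_le_p

/-- P3 : the intersection of the up-sets of the `{x, w x t}` is `↑x`. -/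
lemma inter_S {x y : L₂} (h : ∀ t, y ∈ up ({x, w x t} : Set L₂)) : y ∈ up ({x} : Set L₂) := by
  by_cases hx : x ≤ y
  · exact ⟨x, rfl, hx⟩
  exfalso
  have hw : ∀ t, w x t ≤ y := by
    intro t
    obtain ⟨a, ha, hle⟩ := h t
    simp only [Set.mem_insert_iff, Set.mem_singleton_iff] at ha
    rcases ha with rfl | rfl
    · exact absurd hle hx
    · exact hle
  cases x with
  | p m n =>
    cases m with
    | succ m => exact hx (hw 0)
    | zero =>
      cases y with
      | p a b => have := p_le_p.mp (hw (b + 1)); omega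
      | nt K => have := p_le_nt.mp (hw (K + 1)); omega
      | pw a =>
        have h1 := p_le_pw.mp (hw 0)
        exact hx (p_le_pw.mpr (Or.inr (Or.inr ⟨rfl, by omega⟩)))
  | nt k =>
    cases y with
    | p a b => have := p_le_p.mp (hw a); omega
    | pw a => have := p_le_pw.mp (hw a); omega
    | nt K =>
      have := p_le_nt.mp (hw 0)
      exact hx (nt_le_nt.mpr this.2)
  | pw M =>
    cases M with
    | zero =>
      cases y with
      | p a b => have := p_le_p.mp (hw (b + 1)); omega
      | nt K => have := p_le_nt.mp (hw 0); omega
      | pw a =>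
        have h1 := p_le_pw.mp (hw (a + 1))
        have ha : a = 0 := by omega
        exact hx (pw_le_pw.mpr (Or.inl ha.symm))
    | succ M' =>
      cases y with
      | p a b => have := p_le_p.mp (hw (b + 1)); omega
      | nt K => have := p_le_nt.mp (hw (K + 1)); omega
      | pw a =>
        have h1 := p_le_pw.mp (hw 0)
        exact hx (pw_le_pw.mpr (by omega))

theorem quasicontinuous : QuasicontinuousPoset L₂ := by
  intro x
  refine ⟨⟨{x, w x 0}, (Set.finite_singleton _).insert x, fwb_S x 0⟩, ?_, ?_⟩
  · rintro G ⟨hGfin, hG⟩ H ⟨hHfin, hH⟩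
    obtain ⟨t₁, h₁⟩ := exists_t hG
    obtain ⟨t₂, h₂⟩ := exists_t hH
    refine ⟨{x, w x (max t₁ t₂)}, ⟨(Set.finite_singleton _).insert x, fwb_S x _⟩, ?_, ?_⟩
    · intro y hy
      refine h₁ y ?_
      obtain ⟨a, ha, hle⟩ := hy
      simp only [Set.mem_insert_iff, Set.mem_singleton_iff] at ha
      rcases ha with ha | ha
      · exact ⟨x, Set.mem_insert _ _, ha ▸ hle⟩
      · exact ⟨w x t₁, Set.mem_insert_iff.mpr (Or.inr rfl),
          le_trans (w_mono x (le_max_left t₁ t₂)) (ha ▸ hle)⟩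
    · intro y hy
      refine h₂ y ?_
      obtain ⟨a, ha, hle⟩ := hy
      simp only [Set.mem_insert_iff, Set.mem_singleton_iff] at ha
      rcases ha with ha | ha
      · exact ⟨x, Set.mem_insert _ _, ha ▸ hle⟩
      · exact ⟨w x t₂, Set.mem_insert_iff.mpr (Or.inr rfl),
          le_trans (w_mono x (le_max_right t₁ t₂)) (ha ▸ hle)⟩
  · ext y
    simp only [Set.mem_iInter, Set.mem_setOf_eq]
    constructor
    · rintro ⟨a, ha, hle⟩ F ⟨hFfin, hF⟩
      rw [Set.mem_singleton_iff] at ha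
      subst ha
      obtain ⟨g, hgF, hg⟩ := mem_up_of_fwb hF
      exact ⟨g, hgF, le_trans hg hle⟩
    · intro hy
      exact inter_S (fun t => hy _ ⟨(Set.finite_singleton _).insert x, fwb_S x t⟩)

theorem scottCl_nt : scottCl (Set.range L₂.nt) = Set.univ := by
  letI : TopologicalSpace L₂ := Topology.scott L₂ Set.univ
  haveI : Topology.IsScott L₂ Set.univ := ⟨rfl⟩
  refine Set.eq_univ_of_univ_subset ?_
  have hclosed : IsClosed (closure (Set.range nt)) := isClosed_closure
  rw [Topology.IsScott.isClosed_iff_isLowerSet_and_dirSupClosed] at hclosed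
  obtain ⟨hlow, hdsc⟩ := hclosed
  have hnt : ∀ k, nt k ∈ closure (Set.range nt) := fun k => subset_closure ⟨k, rfl⟩
  have hp1 : ∀ m n, 1 ≤ m → p m n ∈ closure (Set.range nt) := fun m n hm =>
    hlow (p_le_nt.mpr ⟨hm, le_refl n⟩) (hnt n)
  have hpw1 : ∀ M, 1 ≤ M → pw M ∈ closure (Set.range nt) := by
    intro M hM
    refine hdsc (d := {d : L₂ | ∃ j, d = p M j}) ?_ ⟨p M 0, 0, rfl⟩ (dir_pM M) (lub_pM M hM)
    rintro d ⟨j, rfl⟩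
    exact hp1 M j hM
  have hp0 : ∀ n, p 0 n ∈ closure (Set.range nt) := fun n =>
    hlow (p_le_pw.mpr (Or.inr (Or.inr ⟨rfl, by omega⟩)) : p 0 n ≤ pw (n + 1))
      (hpw1 (n + 1) (by omega))
  have hpw0 : pw 0 ∈ closure (Set.range nt) := by
    refine hdsc (d := {d : L₂ | ∃ j, d = p 0 j}) ?_ ⟨p 0 0, 0, rfl⟩ (dir_pM 0) lub_p0
    rintro d ⟨j, rfl⟩
    exact hp0 j
  rintro x -
  cases x with
  | p m n =>
    rcases Nat.eq_zero_or_pos m with rfl | h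
    · exact hp0 n
    · exact hp1 m n h
  | pw M =>
    rcases Nat.eq_zero_or_pos M with rfl | h
    · exact hpw0
    · exact hpw1 M h
  | nt k => exact hnt k

theorem pw0_not_weak : L₂.pw 0 ∉ weakOneStep (Set.range L₂.nt) := by
  rintro ⟨D, hsub, ⟨d, hd⟩, hdir, y, hy, hle⟩
  have hy0 : y = pw 0 := by
    cases y with
    | p a b => exact absurd hle pw_le_p
    | nt K => exact absurd hle pw_le_nt
    | pw a =>
      have := pw_le_pw.mp hle
      have : a = 0 := by omega
      rw [this]
  have hdle : d ≤ pw 0 := hy0 ▸ hy.1 hd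
  obtain ⟨a, ⟨k, rfl⟩, hdk⟩ := hsub hd
  cases d with
  | p m n =>
    have h1 := p_le_nt.mp hdk
    have h2 := p_le_pw.mp hdle
    omega
  | pw a => exact absurd hdk pw_le_nt
  | nt j => exact absurd hdle nt_le_pw

end L₂

theorem L₂_quasicontinuous_not_weakOneStep' :
    QuasicontinuousPoset L₂ ∧ scottCl (Set.range L₂.nt) = Set.univ ∧
      L₂.pw 0 ∉ weakOneStep (Set.range L₂.nt) ∧ ¬ HasWeakOneStepClosure L₂ := by
  refine ⟨L₂.quasicontinuous, L₂.scottCl_nt, L₂.pw0_not_weak, ?_⟩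
  intro h
  have := h (Set.range L₂.nt)
  rw [L₂.scottCl_nt] at this
  exact L₂.pw0_not_weak (this ▸ Set.mem_univ (L₂.pw 0))

/-- `L₂` is a quasicontinuous poset that does not have weak one-step closure:
`cl(ℕ) = L₂` while `(1, ω) ∉ ℕ''`. -/
theorem L₂_quasicontinuous_not_weakOneStep :
    QuasicontinuousPoset L₂ ∧ scottCl (Set.range L₂.nt) = Set.univ ∧
      L₂.pw 0 ∉ weakOneStep (Set.range L₂.nt) ∧ ¬ HasWeakOneStepClosure L₂ := by
  refine ⟨L₂.quasicontinuous, L₂.scottCl_nt, L₂.pw0_not_weak, ?_⟩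
  intro h
  have := h (Set.range L₂.nt)
  rw [L₂.scottCl_nt] at this
  exact L₂.pw0_not_weak (this ▸ Set.mem_univ (L₂.pw 0))
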